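/- Let G = (V,E) be a finite simple graph, k a natural number, and S ⊆ V a set such that G − S is a cluster graph. Suppose s ∈ S has at least one neighbor in each of at least k+2 pairwise distinct connected components of G − S. Then every set X ⊆ V with |X| ≤ k such that G − X is a cluster graph satisfies s ∈ X. -/

import Mathlib

namespace Paper

/-- The graph `G - S` obtained from `G` by deleting the vertices of `S`: edges of `G`
with both endpoints outside `S` (vertices of `S` become isolated). -/
def restrictOutside {V : Type*} (G : SimpleGraph V) (S : Set V) : SimpleGraph V where
  Adj x y := G.Adj x y ∧ x ∉ S ∧ y ∉ S
  symm := ⟨fun _ _ h => ⟨h.1.symm, h.2.2, h.2.1⟩⟩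
  loopless := ⟨fun x h => G.loopless.irrefl x h.1⟩

/-- The vertex set of the connected component of `v` in `G`. -/
def compSet {V : Type*} (G : SimpleGraph V) (v : V) : Set V := {w | G.Reachable v w}

/-- A cluster graph: no induced `P₃`; equivalently, every connected component induces a clique. -/
def IsClusterGraph {V : Type*} (G : SimpleGraph V) : Prop :=
  ∀ ⦃x y z : V⦄, G.Adj x y → G.Adj y z → x ≠ z → G.Adj x z

/-- `G - X` is a disjoint union of cliques each on exactly `c` vertices. -/
def IsUniformClusterDel {V : Type*} (G : SimpleGraph V) (X : Set V) (c : ℕ) : Prop :=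
  ∀ w ∉ X, (restrictOutside G X).IsClique (compSet (restrictOutside G X) w) ∧
    (compSet (restrictOutside G X) w).ncard = c

/-- If `G - S` is a cluster graph and `s ∈ S` has a neighbor in each of at least `k + 2`
pairwise distinct connected components of `G - S` (witnessed by the neighbors in `T`),
then every `X` of size at most `k` with `G - X` a cluster graph contains `s`. -/
theorem stmt0 {V : Type*} [Fintype V] (G : SimpleGraph V) (k : ℕ) (S : Set V)
    (hcluster : IsClusterGraph (restrictOutside G S))
    (s : V) (hsS : s ∈ S)
    (T : Finset V) (hTcard : k + 2 ≤ T.card)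
    (hTS : ∀ t ∈ T, t ∉ S)
    (hTadj : ∀ t ∈ T, G.Adj s t)
    (hTdistinct : ∀ t₁ ∈ T, ∀ t₂ ∈ T, t₁ ≠ t₂ →
      ¬ (restrictOutside G S).Reachable t₁ t₂)
    (X : Set V) (hXcard : X.ncard ≤ k)
    (hXcluster : IsClusterGraph (restrictOutside G X)) :
    s ∈ X := by
  classical
  by_contra hsX
  -- elements of T inside X
  have hsub : ((T.filter (fun t => t ∈ X)) : Set V) ⊆ X := by
    intro t ht
    simp only [Finset.coe_filter, Set.mem_setOf_eq] at ht
    exact ht.2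
  have hin : (T.filter (fun t => t ∈ X)).card ≤ k := by
    have := Set.ncard_le_ncard hsub X.toFinite
    rw [Set.ncard_coe_finset] at this; exact this.trans hXcard
  have hout : 1 < (T.filter (fun t => t ∉ X)).card := by
    have := Finset.card_filter_add_card_filter_not
      (s := T) (p := fun t => t ∈ X)
    omega
  obtain ⟨t₁, ht₁, t₂, ht₂, hne⟩ := Finset.one_lt_card.mp hout
  simp only [Finset.mem_filter] at ht₁ ht₂
  have h1 : (restrictOutside G X).Adj s t₁ := ⟨hTadj t₁ ht₁.1, hsX, ht₁.2⟩
  have h2 : (restrictOutside G X).Adj s t₂ := ⟨hTadj t₂ ht₂.1, hsX, ht₂.2⟩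
  have h12 : (restrictOutside G X).Adj t₁ t₂ := hXcluster h1.symm h2 hne
  have hS12 : (restrictOutside G S).Adj t₁ t₂ :=
    ⟨h12.1, hTS t₁ ht₁.1, hTS t₂ ht₂.1⟩
  exact hTdistinct t₁ ht₁.1 t₂ ht₂.1 hne hS12.reachable

end Paper
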